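/- Let G=(X,w,κ,μ) be a graph and fix 1≤p<∞. The formal graph Laplacian Δ maps every finitely supported function into ℓ^p(X,μ) if and only if condition (C_p) holds; equivalently, for every x∈X the function Δδ_x belongs to ℓ^p(X,μ) if and only if ∑_{y∈X} w(x,y)^p/μ(y)^{p−1}<∞. In particular, for p=1 condition (C_1) always holds, so Δ(C_c(X))⊆ℓ^1(X,μ) for every graph. -/

import Mathlib

open Filter Topology MeasureTheory

/-- A weighted graph `G = (X, w, κ, μ)`. -/
structure WGraph (X : Type*) where
  w : X → X → ℝ
  kap : X → ℝ
  mu : X → ℝ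
  w_nonneg : ∀ x y, 0 ≤ w x y
  w_symm : ∀ x y, w x y = w y x
  w_loopless : ∀ x, w x x = 0
  w_summable : ∀ x, Summable (fun y => w x y)
  kap_nonneg : ∀ x, 0 ≤ kap x
  mu_pos : ∀ x, 0 < mu x

namespace WGraph

variable {X : Type*}

/-- Adjacency: `x ∼ y` iff `w x y > 0`. -/
def Adj (G : WGraph X) (x y : X) : Prop := 0 < G.w x y

/-- `G` is connected: any two nodes are joined by a finite walk. -/
def Connected (G : WGraph X) : Prop := ∀ x y : X, Relation.ReflTransGen G.Adj x y

/-- An infinite path: injective sequence of consecutively adjacent nodes. -/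
def InfinitePath (G : WGraph X) (γ : ℕ → X) : Prop :=
  Function.Injective γ ∧ ∀ n, G.Adj (γ n) (γ (n + 1))

/-- Condition (IP): every infinite path has infinite total measure. -/
def CondIP (G : WGraph X) : Prop :=
  ∀ γ : ℕ → X, G.InfinitePath γ → ¬ Summable (fun n => G.mu (γ n))

/-- Condition (B): bounded edge degree. -/
def CondB (G : WGraph X) : Prop :=
  ∃ C : ℝ, ∀ x, (∑' y, G.w x y) / G.mu x ≤ C

/-- Condition (C_p). -/
def CondCp (G : WGraph X) (p : ℝ) : Prop :=
  ∀ x, Summable (fun y => G.w x y ^ p / G.mu y ^ (p - 1))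

/-- Membership in `ℓ^p(X,μ)` for `1 ≤ p < ∞`. -/
def memLp (G : WGraph X) (p : ℝ) (u : X → ℝ) : Prop :=
  Summable (fun x => |u x| ^ p * G.mu x)

/-- The `ℓ^p(X,μ)`-norm. -/
noncomputable def lpNorm (G : WGraph X) (p : ℝ) (u : X → ℝ) : ℝ :=
  (∑' x, |u x| ^ p * G.mu x) ^ (1 / p)

/-- Membership in the formal domain of the graph Laplacian. -/
def inDomLap (G : WGraph X) (u : X → ℝ) : Prop :=
  ∀ x, Summable (fun y => G.w x y * |u y|)

/-- The formal graph Laplacian. -/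
noncomputable def lap (G : WGraph X) (u : X → ℝ) (x : X) : ℝ :=
  (1 / G.mu x) * ∑' y, G.w x y * (u x - u y) + (G.kap x / G.mu x) * u x

/-- The nonlinear operator `𝒜 u = -f ∘ u + Δ u`. -/
noncomputable def Aop (G : WGraph X) (f : ℝ → ℝ) (u : X → ℝ) (x : X) : ℝ :=
  -f (u x) + G.lap u x

/-- `dom_p(𝒜)`. -/
def inDomA (G : WGraph X) (f : ℝ → ℝ) (p : ℝ) (u : X → ℝ) : Prop :=
  G.memLp p u ∧ G.inDomLap u ∧ G.memLp p (G.Aop f u)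

end WGraph

/-- Condition (F1): `f` continuous, monotone decreasing, `f 0 = 0`. -/
def CondF1 (f : ℝ → ℝ) : Prop := Continuous f ∧ Antitone f ∧ f 0 = 0

/-- Condition (F2): `f` uniformly Lipschitz with constant `L > 0`, `f 0 = 0`. -/
def CondF2 (f : ℝ → ℝ) (L : ℝ) : Prop :=
  0 < L ∧ (∀ s t : ℝ, |f t - f s| ≤ L * |t - s|) ∧ f 0 = 0

section Aux

variable {X : Type*}

private lemma summable_congr_off_one {f g : X → ℝ} (a : X) (h : ∀ y, y ≠ a → f y = g y) :
    Summable f ↔ Summable g := by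
  classical
  rw [← Finset.summable_compl_iff ({a} : Finset X),
    ← Finset.summable_compl_iff (f := g) ({a} : Finset X)]
  exact summable_congr fun y => h y (by simpa using y.2)

private lemma rpow_div_mul {a m p : ℝ} (ha : 0 ≤ a) (hm : 0 < m) :
    (a / m) ^ p * m = a ^ p / m ^ (p - 1) := by
  rw [Real.div_rpow ha hm.le, Real.rpow_sub hm, Real.rpow_one, div_div_eq_mul_div]
  ring

private lemma WGraph.lap_delta [DecidableEq X] (G : WGraph X) (x : X) :
    G.lap (fun y => if y = x then (1 : ℝ) else 0) =
      fun y => if y = x then ((∑' z, G.w x z) + G.kap x) / G.mu x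
        else (-(G.w y x)) / G.mu y := by
  funext y
  unfold WGraph.lap
  by_cases hy : y = x
  · subst hy
    simp only [eq_self_iff_true, if_true]
    have h1 : (∑' z, G.w y z * ((1 : ℝ) - if z = y then 1 else 0)) = ∑' z, G.w y z := by
      apply tsum_congr
      intro z
      by_cases hz : z = y
      · subst hz; simp [G.w_loopless]
      · simp [hz]
    rw [h1]; ring
  · simp only [if_neg hy]
    have h1 : (fun z => G.w y z * ((0:ℝ) - if z = x then 1 else 0)) =
        fun z => if z = x then -(G.w y x) else 0 := by
      funext z
      by_cases hz : z = x <;> simp [hz]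
    rw [h1, tsum_ite_eq]
    ring

private lemma WGraph.memLp_lap_delta_iff [DecidableEq X] (G : WGraph X) {p : ℝ} (hp : 1 ≤ p)
    (x : X) :
    G.memLp p (G.lap (fun y => if y = x then (1 : ℝ) else 0)) ↔
      Summable (fun y => G.w x y ^ p / G.mu y ^ (p - 1)) := by
  unfold WGraph.memLp
  rw [G.lap_delta x]
  apply summable_congr_off_one x
  intro y hy
  simp only [if_neg hy]
  have hmu := G.mu_pos y
  have hw := G.w_nonneg y x
  rw [show (-(G.w y x)) / G.mu y = -(G.w y x / G.mu y) by ring, abs_neg,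
    abs_of_nonneg (div_nonneg hw hmu.le), rpow_div_mul hw hmu, G.w_symm y x]

private lemma WGraph.lap_zero (G : WGraph X) : G.lap (fun _ => (0 : ℝ)) = fun _ => 0 := by
  funext y
  unfold WGraph.lap
  simp

private lemma WGraph.memLp_zero (G : WGraph X) {p : ℝ} (hp : 1 ≤ p) :
    G.memLp p (fun _ => (0 : ℝ)) := by
  unfold WGraph.memLp
  have hp0 : p ≠ 0 := ne_of_gt (lt_of_lt_of_le one_pos hp)
  have : (fun x => |(0 : ℝ)| ^ p * G.mu x) = fun _ => 0 := by
    funext x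
    rw [abs_zero, Real.zero_rpow hp0, zero_mul]
  rw [this]
  exact summable_zero

private lemma WGraph.summable_term (G : WGraph X) {f : X → ℝ}
    (hf : (Function.support f).Finite) (y : X) :
    Summable (fun z => G.w y z * (f y - f z)) := by
  have h1 : Summable (fun z => G.w y z * f y) := (G.w_summable y).mul_right (f y)
  have h2 : Summable (fun z => G.w y z * f z) := by
    refine summable_of_finite_support (hf.subset ?_)
    intro z hz
    simp only [Function.mem_support, ne_eq] at hz ⊢
    intro h0
    exact hz (by rw [h0, mul_zero])
  exact (h1.sub h2).congr fun z => by ring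

private lemma WGraph.lap_add (G : WGraph X) {u v : X → ℝ}
    (hu : ∀ y, Summable fun z => G.w y z * (u y - u z))
    (hv : ∀ y, Summable fun z => G.w y z * (v y - v z)) :
    G.lap (fun x => u x + v x) = fun y => G.lap u y + G.lap v y := by
  funext y
  unfold WGraph.lap
  rw [show (fun z => G.w y z * ((u y + v y) - (u z + v z))) =
      fun z => G.w y z * (u y - u z) + G.w y z * (v y - v z) from funext fun z => by ring,
    (hu y).tsum_add (hv y)]
  ring

private lemma WGraph.lap_smul (G : WGraph X) (c : ℝ) (u : X → ℝ) :
    G.lap (fun x => c * u x) = fun y => c * G.lap u y := by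
  funext y
  unfold WGraph.lap
  rw [show (fun z => G.w y z * (c * u y - c * u z)) =
      fun z => c * (G.w y z * (u y - u z)) from funext fun z => by ring, tsum_mul_left]
  ring

private lemma WGraph.memLp_add (G : WGraph X) {p : ℝ} (hp : 1 ≤ p) {u v : X → ℝ}
    (hu : G.memLp p u) (hv : G.memLp p v) : G.memLp p (fun x => u x + v x) := by
  have hple : ∀ a b : ℝ, |a + b| ^ p ≤ 2 ^ p * (|a| ^ p + |b| ^ p) := by
    intro a b
    have h1 : |a + b| ≤ 2 * max |a| |b| := by
      calc |a + b| ≤ |a| + |b| := abs_add_le a b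
      _ ≤ max |a| |b| + max |a| |b| := add_le_add (le_max_left _ _) (le_max_right _ _)
      _ = 2 * max |a| |b| := by ring
    calc |a + b| ^ p ≤ (2 * max |a| |b|) ^ p :=
          Real.rpow_le_rpow (abs_nonneg _) h1 (by linarith)
    _ = 2 ^ p * (max |a| |b|) ^ p :=
          Real.mul_rpow (by norm_num) (le_max_of_le_left (abs_nonneg a))
    _ ≤ 2 ^ p * (|a| ^ p + |b| ^ p) := by
        refine mul_le_mul_of_nonneg_left ?_ (Real.rpow_nonneg (by norm_num) p)
        rcases max_cases |a| |b| with ⟨h, _⟩ | ⟨h, _⟩ <;> rw [h]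
        · nlinarith [Real.rpow_nonneg (abs_nonneg b) p]
        · nlinarith [Real.rpow_nonneg (abs_nonneg a) p]
  unfold WGraph.memLp at hu hv ⊢
  refine Summable.of_nonneg_of_le
    (fun x => mul_nonneg (Real.rpow_nonneg (abs_nonneg _) _) (G.mu_pos x).le)
    (fun x => ?_) ((hu.mul_left (2 ^ p)).add (hv.mul_left (2 ^ p)))
  have h := mul_le_mul_of_nonneg_right (hple (u x) (v x)) (G.mu_pos x).le
  calc |u x + v x| ^ p * G.mu x ≤ 2 ^ p * (|u x| ^ p + |v x| ^ p) * G.mu x := h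
  _ = 2 ^ p * (|u x| ^ p * G.mu x) + 2 ^ p * (|v x| ^ p * G.mu x) := by ring

private lemma WGraph.memLp_smul (G : WGraph X) {p : ℝ} (c : ℝ) {u : X → ℝ}
    (hu : G.memLp p u) : G.memLp p (fun x => c * u x) := by
  unfold WGraph.memLp at hu ⊢
  refine ((hu.mul_left (|c| ^ p)).congr fun x => ?_)
  rw [abs_mul, Real.mul_rpow (abs_nonneg c) (abs_nonneg (u x)), mul_assoc]

private lemma WGraph.memLp_lap_of_suppFin [DecidableEq X] (G : WGraph X) {p : ℝ} (hp : 1 ≤ p)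
    (hC : G.CondCp p) (u : X → ℝ) (hu : (Function.support u).Finite) :
    G.memLp p (G.lap u) := by
  have key : ∀ (s : Finset X) (u : X → ℝ), Function.support u ⊆ ↑s → G.memLp p (G.lap u) := by
    intro s
    induction s using Finset.induction_on with
    | empty =>
      intro u hs
      have : u = fun _ => 0 := funext fun x => by
        by_contra h
        exact absurd (hs (Function.mem_support.2 h)) (by simp)
      rw [this, G.lap_zero]
      exact G.memLp_zero hp
    | insert a s ha ih =>
      intro u hs
      set v : X → ℝ := Function.update u a 0 with hvdef
      have hvs : Function.support v ⊆ ↑s := by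
        intro y hy
        simp only [Function.mem_support, ne_eq] at hy
        by_cases hya : y = a
        · exact absurd (by rw [hya] at hy ⊢; exact hvdef ▸ Function.update_self a 0 u) hy
        · have := hs (Function.mem_support.2 (by
            rwa [hvdef, Function.update_of_ne hya] at hy))
          simp only [Finset.coe_insert, Set.mem_insert_iff] at this
          rcases this with h | h
          · exact absurd h hya
          · exact h
      have hvfin : (Function.support v).Finite := s.finite_toSet.subset hvs
      have hδfin : (Function.support (fun y => if y = a then (1 : ℝ) else 0)).Finite := by
        refine (Set.finite_singleton a).subset ?_
        intro y hy
        by_contra h'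
        exact hy (if_neg (by simpa using h'))
      have hcδfin : (Function.support (fun y => u a * (if y = a then (1 : ℝ) else 0))).Finite := by
        refine hδfin.subset ?_
        intro y hy
        simp only [Function.mem_support, ne_eq] at hy ⊢
        intro h0
        exact hy (by rw [h0, mul_zero])
      have hud : u = fun y => v y + u a * (if y = a then 1 else 0) := by
        funext y
        by_cases hy : y = a
        · subst hy
          simp [hvdef, Function.update_self]
        · simp [hvdef, Function.update_of_ne hy, hy]
      have hδ : G.memLp p (G.lap (fun y => if y = a then (1 : ℝ) else 0)) :=
        (G.memLp_lap_delta_iff hp a).2 (hC a)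
      rw [hud, G.lap_add (fun y => G.summable_term hvfin y)
        (fun y => G.summable_term hcδfin y)]
      refine G.memLp_add hp (ih v hvs) ?_
      rw [G.lap_smul (u a) (fun y => if y = a then (1 : ℝ) else 0)]
      exact G.memLp_smul (u a) hδ
  exact key hu.toFinset u (by simp)

end Aux


/-- the formal graph Laplacian maps every finitely supported function
into `ℓ^p(X,μ)` iff condition `(C_p)` holds; equivalently, for every `x`,
`Δδ_x ∈ ℓ^p(X,μ)` iff `∑_y w(x,y)^p / μ(y)^{p-1} < ∞`.  In particular, for `p = 1`
condition `(C_1)` always holds, so `Δ(C_c(X)) ⊆ ℓ¹(X,μ)` for every graph. -/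
theorem stmt0 {X : Type*} [Countable X] [DecidableEq X] (G : WGraph X) (p : ℝ) (hp : 1 ≤ p) :
    ((∀ u : X → ℝ, (Function.support u).Finite → G.memLp p (G.lap u)) ↔ G.CondCp p) ∧
    (∀ x : X, (G.memLp p (G.lap (fun y => if y = x then (1 : ℝ) else 0)) ↔
      Summable (fun y => G.w x y ^ p / G.mu y ^ (p - 1)))) ∧
    (p = 1 → ∀ u : X → ℝ, (Function.support u).Finite → G.memLp 1 (G.lap u)) := by
  classical
  have hC1 : ∀ x : X, G.memLp p (G.lap (fun y => if y = x then (1:ℝ) else 0)) ↔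
      Summable (fun y => G.w x y ^ p / G.mu y ^ (p - 1)) := fun x => G.memLp_lap_delta_iff hp x
  refine ⟨⟨fun h x => ?_, fun hC u hu => G.memLp_lap_of_suppFin hp hC u hu⟩, hC1,
    fun hp1 u hu => ?_⟩
  · refine (hC1 x).1 (h _ ((Set.finite_singleton x).subset ?_))
    intro y hy
    by_contra h'
    exact hy (if_neg (by simpa using h'))
  · subst hp1
    have hCone : G.CondCp 1 := by
      intro x
      refine (G.w_summable x).congr fun y => ?_
      rw [sub_self, Real.rpow_zero, div_one, Real.rpow_one]
    exact G.memLp_lap_of_suppFin le_rfl hCone u hu
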